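/- arXiv:2602.03736 — 2 statements merged into one kernel-verified Lean document; each statement's English description precedes it below -/
import Mathlib

section
/- In the semigroup (ℕ,+), every central set A satisfies Furstenberg's Central Sets Theorem: for each k ∈ ℕ and sequences ⟨y_{i,n}⟩_{n=1}^∞ in ℤ for i ∈ {1,…,k}, there exist sequences ⟨a_n⟩ in ℕ and ⟨H_n⟩ in 𝒫_f(ℕ) with max H_n < min H_{n+1}, such that for each i ∈ {1,…,k} and each F ∈ 𝒫_f(ℕ), Σ_{n∈F}(a_n + Σ_{t∈H_n} y_{i,t}) ∈ A. -/
/-- `A` is thick: every finite nonempty set can be right-translated into `A`. -/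
def Thick {S : Type*} [Semigroup S] (A : Set S) : Prop :=
  ∀ E : Finset S, E.Nonempty → ∃ x : S, ∀ e ∈ E, e * x ∈ A

def Syndetic {S : Type*} [Semigroup S] (A : Set S) : Prop :=
  ∃ F : Finset S, F.Nonempty ∧ ∀ s : S, ∃ t ∈ F, t * s ∈ A

def PiecewiseSyndetic {S : Type*} [Semigroup S] (A : Set S) : Prop :=
  ∃ F : Finset S, F.Nonempty ∧ Thick {s : S | ∃ t ∈ F, t * s ∈ A}

def ThickAdd {S : Type*} [AddSemigroup S] (A : Set S) : Prop :=
  ∀ E : Finset S, E.Nonempty → ∃ x : S, ∀ e ∈ E, e + x ∈ A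

def SyndeticAdd {S : Type*} [AddSemigroup S] (A : Set S) : Prop :=
  ∃ F : Finset S, F.Nonempty ∧ ∀ s : S, ∃ t ∈ F, t + s ∈ A

def PiecewiseSyndeticAdd {S : Type*} [AddSemigroup S] (A : Set S) : Prop :=
  ∃ F : Finset S, F.Nonempty ∧ ThickAdd {s : S | ∃ t ∈ F, t + s ∈ A}

/-- Sum of `f t` over a nonempty finite `H ⊆ ℕ` in a commutative semigroup
(junk value `f 0` when `H = ∅`). -/
def fSum {S : Type*} [AddCommSemigroup S] (H : Finset ℕ) (f : ℕ → S) : S :=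
  match Finset.sort H (· ≤ ·) with
  | [] => f 0
  | a :: l => l.foldl (fun s t => s + f t) (f a)

/-- `J`-set in a commutative semigroup. -/
def JSetAdd {S : Type*} [AddCommSemigroup S] (A : Set S) : Prop :=
  ∀ F : Finset (ℕ → S), F.Nonempty →
    ∃ (a : S) (H : Finset ℕ), H.Nonempty ∧ ∀ f ∈ F, a + fSum H f ∈ A

/-- `x(m,a,t,f) = a(0)·f(t 0)·a(1)·f(t 1)⋯f(t (m-1))·a(m)` (0-indexed version of
`(∏_{j=1}^m a(j)·f(t(j)))·a(m+1)`). -/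
def xNC {S : Type*} [Semigroup S] (m : ℕ) (a : ℕ → S) (t : ℕ → ℕ) (f : ℕ → S) : S :=
  (List.range m).foldl (fun s j => s * f (t j) * a (j + 1)) (a 0)

/-- `J`-set in a not-necessarily-commutative semigroup. -/
def JSetNC {S : Type*} [Semigroup S] (A : Set S) : Prop :=
  ∀ G : Finset (ℕ → S), G.Nonempty →
    ∃ (m : ℕ) (a : ℕ → S) (t : ℕ → ℕ), 1 ≤ m ∧
      (∀ i j : ℕ, i < j → j < m → t i < t j) ∧
      ∀ f ∈ G, xNC m a t f ∈ A

/-- `v 0 + v 1 + ⋯ + v r` in an additive semigroup. -/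
def seqSum {S : Type*} [AddSemigroup S] (v : ℕ → S) (r : ℕ) : S :=
  (List.range r).foldl (fun s j => s + v (j + 1)) (v 0)

/-- `v 0 * v 1 * ⋯ * v r` in a semigroup. -/
def seqProd {S : Type*} [Semigroup S] (v : ℕ → S) (r : ℕ) : S :=
  (List.range r).foldl (fun s j => s * v (j + 1)) (v 0)

/-- Collectionwise piecewise syndetic family (multiplicative). -/
def CollectionwisePS {S : Type*} [Semigroup S] (𝒜 : Set (Set S)) : Prop :=
  ∃ (G : Finset (Set S) → Finset S) (x : Finset (Set S) → Finset S → S),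
    ∀ (F : Finset S) (ℱ ℋ : Finset (Set S)), ℱ.Nonempty → ↑ℋ ⊆ 𝒜 → ℱ ⊆ ℋ →
      ∀ y ∈ F, ∃ t ∈ G ℱ, t * (y * x ℋ F) ∈ ⋂₀ (ℱ : Set (Set S))

/-- Collectionwise piecewise syndetic family (additive). -/
def CollectionwisePSAdd {S : Type*} [AddSemigroup S] (𝒜 : Set (Set S)) : Prop :=
  ∃ (G : Finset (Set S) → Finset S) (x : Finset (Set S) → Finset S → S),
    ∀ (F : Finset S) (ℱ ℋ : Finset (Set S)), ℱ.Nonempty → ↑ℋ ⊆ 𝒜 → ℱ ⊆ ℋ →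
      ∀ y ∈ F, ∃ t ∈ G ℱ, t + (y + x ℋ F) ∈ ⋂₀ (ℱ : Set (Set S))

/-- Central set (multiplicative), via the combinatorial characterization. -/
def Central {S : Type*} [Semigroup S] (A : Set S) : Prop :=
  ∃ (I : Type) (C : I → Set S), Nonempty I ∧
    (∀ N, C N ⊆ A) ∧
    (∀ N M : I, ∃ P : I, C P ⊆ C N ∧ C P ⊆ C M) ∧
    (∀ N : I, ∀ y ∈ C N, ∃ M : I, C M ⊆ {s : S | y * s ∈ C N}) ∧
    CollectionwisePS {B : Set S | ∃ N : I, B = C N}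

/-- Central set (additive), via the combinatorial characterization. -/
def CentralAdd {S : Type*} [AddSemigroup S] (A : Set S) : Prop :=
  ∃ (I : Type) (C : I → Set S), Nonempty I ∧
    (∀ N, C N ⊆ A) ∧
    (∀ N M : I, ∃ P : I, C P ⊆ C N ∧ C P ⊆ C M) ∧
    (∀ N : I, ∀ y ∈ C N, ∃ M : I, C M ⊆ {s : S | y + s ∈ C N}) ∧
    CollectionwisePSAdd {B : Set S | ∃ N : I, B = C N}

namespace CSTProof

open Filter

attribute [local instance] Ultrafilter.add Ultrafilter.addSemigroup

lemma mem_addU {U V : Ultrafilter ℕ} {A : Set ℕ} :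
    A ∈ U + V ↔ {m : ℕ | {n : ℕ | m + n ∈ A} ∈ V} ∈ U := by
  have h := Ultrafilter.eventually_add U V (· ∈ A)
  simp only [Filter.eventually_iff, Ultrafilter.mem_coe] at h
  exact h

/-- A closed left ideal of `βℕ`. -/
def LeftIdeal (L : Set (Ultrafilter ℕ)) : Prop :=
  L.Nonempty ∧ IsClosed L ∧ ∀ p ∈ L, ∀ q : Ultrafilter ℕ, q + p ∈ L

lemma leftIdeal_range (r : Ultrafilter ℕ) : LeftIdeal (Set.range (· + r)) := by
  refine ⟨⟨r + r, r, rfl⟩, (isCompact_range (Ultrafilter.continuous_add_left r)).isClosed, ?_⟩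
  rintro p ⟨w, rfl⟩ q
  exact ⟨q + w, by simp [add_assoc]⟩

lemma exists_minimal_leftIdeal (L₀ : Set (Ultrafilter ℕ)) (h₀ : LeftIdeal L₀) :
    ∃ L, L ⊆ L₀ ∧ LeftIdeal L ∧ ∀ r ∈ L, Set.range (· + r) = L := by
  obtain ⟨L, hLsub, hLmin⟩ :
      ∃ L ⊆ L₀, Minimal (fun X => X ∈ {X | LeftIdeal X ∧ X ⊆ L₀}) L := by
    apply zorn_superset_nonempty
    · intro c hc hchain hcne
      haveI : Nonempty c := ⟨⟨hcne.choose, hcne.choose_spec⟩⟩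
      refine ⟨⋂₀ c, ⟨⟨?_, ?_, ?_⟩, ?_⟩, fun s hs => Set.sInter_subset_of_mem hs⟩
      · have := IsCompact.nonempty_iInter_of_directed_nonempty_isCompact_isClosed
          (fun s : c => (s : Set (Ultrafilter ℕ)))
          (fun s t => ?_) (fun s => (hc s.2).1.1)
          (fun s => (hc s.2).1.2.1.isCompact) (fun s => (hc s.2).1.2.1)
        · rwa [Set.sInter_eq_iInter]
        · rcases hchain.total s.2 t.2 with h | h
          · exact ⟨s, subset_refl _, h⟩
          · exact ⟨t, h, subset_refl _⟩
      · exact isClosed_sInter fun s hs => (hc hs).1.2.1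
      · intro p hp q
        exact Set.mem_sInter.2 fun s hs => (hc hs).1.2.2 p (Set.mem_sInter.1 hp s hs) q
      · obtain ⟨s, hs⟩ := hcne
        exact (Set.sInter_subset_of_mem hs).trans (hc hs).2
    · exact ⟨h₀, subset_refl _⟩
  refine ⟨L, hLmin.prop.2, hLmin.prop.1, fun r hr => ?_⟩
  have hsub : Set.range (· + r) ⊆ L := by
    rintro p ⟨w, rfl⟩
    exact hLmin.prop.1.2.2 r hr w
  exact Set.Subset.antisymm hsub
    (hLmin.2 ⟨leftIdeal_range r, hsub.trans hLmin.prop.2⟩ hsub)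

def PWS (B : Set ℕ) : Prop :=
  ∃ T : Finset ℕ, ∀ F : Finset ℕ, ∃ x : ℕ, ∀ y ∈ F, ∃ a ∈ T, a + (y + x) ∈ B

lemma pws_jset {B : Set ℕ} (hB : PWS B) {k : ℕ} (f : Fin k → ℕ → ℕ) (c : ℕ) :
    ∃ (a : ℕ) (Hf : Finset ℕ), Hf.Nonempty ∧ (∀ t ∈ Hf, c < t) ∧
      ∀ i, a + ∑ t ∈ Hf, f i t ∈ B := by
  classical
  rcases Nat.eq_zero_or_pos k with hk | hk
  · subst hk
    exact ⟨0, {c + 1}, Finset.singleton_nonempty _, by simp, fun i => i.elim0⟩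
  obtain ⟨T, hT⟩ := hB
  obtain ⟨ι, ιfin, hHJ⟩ :=
    Combinatorics.Line.exists_mono_in_high_dimension (Fin k) {a // a ∈ T}
  haveI := ιfin
  set pos : ι → ℕ := fun i => c + 1 + (Fintype.equivFin ι i : ℕ) with hpos
  have pos_inj : Function.Injective pos := by
    intro i j hij
    simp only [hpos] at hij
    have : (Fintype.equivFin ι i : ℕ) = (Fintype.equivFin ι j : ℕ) := by omega
    exact (Fintype.equivFin ι).injective (Fin.ext this)
  have pos_gt : ∀ i, c < pos i := fun i => by simp only [hpos]; omega
  set g : (ι → Fin k) → ℕ := fun w => ∑ i : ι, f (w i) (pos i) with hg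
  obtain ⟨x₀, hx₀⟩ := hT ((Finset.univ : Finset (ι → Fin k)).image g)
  have hcol : ∀ w : ι → Fin k, ∃ a ∈ T, a + (g w + x₀) ∈ B := fun w =>
    hx₀ (g w) (Finset.mem_image_of_mem g (Finset.mem_univ w))
  let Col : (ι → Fin k) → {a // a ∈ T} := fun w => ⟨(hcol w).choose, (hcol w).choose_spec.1⟩
  have hColspec : ∀ w, (Col w : ℕ) + (g w + x₀) ∈ B := fun w => (hcol w).choose_spec.2
  obtain ⟨l, a₀, hl⟩ := hHJ Col
  set D : Finset ι := Finset.univ.filter (fun i => l.idxFun i = none) with hD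
  set Hf : Finset ℕ := D.image pos with hHf
  set v₀ : Fin k := ⟨0, hk⟩ with hv₀
  set fixedsum : ℕ :=
    ∑ i ∈ Finset.univ.filter (fun i => ¬l.idxFun i = none), f (l v₀ i) (pos i) with hfs
  refine ⟨(a₀ : ℕ) + x₀ + fixedsum, Hf, ?_, ?_, ?_⟩
  · obtain ⟨i0, hi0⟩ := l.proper
    exact ⟨pos i0, Finset.mem_image_of_mem pos (Finset.mem_filter.2 ⟨Finset.mem_univ _, hi0⟩)⟩
  · intro t ht
    obtain ⟨i, _, rfl⟩ := Finset.mem_image.1 ht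
    exact pos_gt i
  · intro v
    have hsum : ∑ t ∈ Hf, f v t = ∑ i ∈ D, f v (pos i) :=
      Finset.sum_image (fun i _ j _ h => pos_inj h)
    have hgl : (∑ i : ι, f ((l.idxFun i).getD v) (pos i)) = (∑ i ∈ D, f v (pos i)) + fixedsum := by
      rw [← Finset.sum_filter_add_sum_filter_not Finset.univ (fun i => l.idxFun i = none)
        (fun i => f ((l.idxFun i).getD v) (pos i))]
      congr 1
      · apply Finset.sum_congr rfl
        intro i hi
        have h1 : l.idxFun i = none := by
          simpa using (Finset.mem_filter.1 hi).2
        rw [h1, Option.getD_none]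
      · apply Finset.sum_congr rfl
        intro i hi
        have h2 : ¬l.idxFun i = none := by
          simpa using (Finset.mem_filter.1 hi).2
        obtain ⟨b, hb⟩ := Option.ne_none_iff_exists'.1 h2
        simp [hb]
    have hB' := hColspec (l v)
    rw [hl v] at hB'
    have heq : (a₀ : ℕ) + x₀ + fixedsum + ∑ t ∈ Hf, f v t
        = (a₀ : ℕ) + ((∑ i : ι, f ((l.idxFun i).getD v) (pos i)) + x₀) := by
      rw [hsum, hgl]; ring
    rw [heq]
    exact hB'

/-- From an ultrafilter extending a directed nonempty family. -/
lemma exists_ultrafilter_of_directed {ι : Type*} [Nonempty ι] (W : ι → Set ℕ)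
    (hne : ∀ i, (W i).Nonempty)
    (hdir : ∀ i j, ∃ l, W l ⊆ W i ∧ W l ⊆ W j) :
    ∃ u : Ultrafilter ℕ, ∀ i, W i ∈ u := by
  have hbot : NeBot (⨅ i, 𝓟 (W i)) := by
    apply iInf_neBot_of_directed
    · intro i j
      obtain ⟨l, h1, h2⟩ := hdir i j
      exact ⟨l, principal_mono.2 h1, principal_mono.2 h2⟩
    · exact fun i => principal_neBot_iff.2 (hne i)
  obtain ⟨u, hu⟩ := Ultrafilter.exists_le (⨅ i, 𝓟 (W i))
  exact ⟨u, fun i => le_principal_iff.1 (hu.trans (iInf_le _ i))⟩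

theorem central_exists (A : Set ℕ) (hA : CentralAdd A) :
    ∃ q : Ultrafilter ℕ, q + q = q ∧ A ∈ q ∧ ∀ B ∈ q, PWS B := by
  classical
  obtain ⟨I, C, hI, hCA, _hdir, hshift, G, x, hGx⟩ := hA
  set 𝒜 : Set (Set ℕ) := {B | ∃ N : I, B = C N} with h𝒜
  -- Step A : the ultrafilter u
  obtain ⟨u, hu⟩ :
      ∃ u : Ultrafilter ℕ,
        ∀ (p : Finset ℕ × {ℋ : Finset (Set ℕ) // ↑ℋ ⊆ 𝒜}),
          {z : ℕ | ∀ y ∈ p.1, ∀ ℱ : Finset (Set ℕ), ℱ.Nonempty → ℱ ⊆ p.2.1 →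
            ∃ t ∈ G ℱ, t + (y + z) ∈ ⋂₀ (ℱ : Set (Set ℕ))} ∈ u := by
    haveI : Nonempty {ℋ : Finset (Set ℕ) // ↑ℋ ⊆ 𝒜} := ⟨⟨∅, by simp⟩⟩
    apply exists_ultrafilter_of_directed
    · rintro ⟨F, ℋ, hℋ⟩
      refine ⟨x ℋ F, ?_⟩
      intro y hy ℱ hℱne hℱsub
      exact hGx F ℱ ℋ hℱne hℋ hℱsub y hy
    · rintro ⟨F₁, ℋ₁, h₁⟩ ⟨F₂, ℋ₂, h₂⟩
      refine ⟨⟨F₁ ∪ F₂, ⟨ℋ₁ ∪ ℋ₂, by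
        rw [Finset.coe_union]; exact Set.union_subset h₁ h₂⟩⟩, ?_, ?_⟩
      · intro z hz y hy ℱ hne hsub
        exact hz y (Finset.mem_union_left _ hy) ℱ hne (hsub.trans Finset.subset_union_left)
      · intro z hz y hy ℱ hne hsub
        exact hz y (Finset.mem_union_right _ hy) ℱ hne (hsub.trans Finset.subset_union_right)
  -- Step B : minimal left ideal inside range (· + u)
  obtain ⟨L, hLsub, hL, hLmin⟩ := exists_minimal_leftIdeal _ (leftIdeal_range u)
  -- Step C : every r ∈ L contains the sets D_ℱ
  have hD : ∀ r ∈ L, ∀ ℱ : Finset (Set ℕ), ℱ.Nonempty → ↑ℱ ⊆ 𝒜 →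
      ∃ t ∈ G ℱ, {z : ℕ | t + z ∈ ⋂₀ (ℱ : Set (Set ℕ))} ∈ r := by
    intro r hr ℱ hℱne hℱsub
    obtain ⟨w, rfl⟩ := hLsub hr
    have hDmem : {z : ℕ | ∃ t ∈ G ℱ, t + z ∈ ⋂₀ (ℱ : Set (Set ℕ))} ∈ w + u := by
      rw [mem_addU]
      apply Filter.univ_mem'
      intro m
      refine mem_of_superset (hu (⟨{m}, ⟨ℱ, hℱsub⟩⟩)) ?_
      intro z hz
      exact hz m (Finset.mem_singleton_self m) ℱ hℱne (le_refl ℱ)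
    have : (⋃ t ∈ (G ℱ : Set ℕ), {z : ℕ | t + z ∈ ⋂₀ (ℱ : Set (Set ℕ))}) ∈ w + u := by
      refine mem_of_superset hDmem ?_
      rintro z ⟨t, ht, hz⟩
      exact Set.mem_biUnion ht hz
    rcases (Ultrafilter.finite_biUnion_mem_iff (G ℱ).finite_toSet).1 this with ⟨t, ht, h⟩
    exact ⟨t, ht, h⟩
  -- Step D : the ultrafilter v and p = v + r with all C N ∈ p
  obtain ⟨r, hrL⟩ := hL.1
  haveI : Nonempty {ℱ : Finset (Set ℕ) // ℱ.Nonempty ∧ ↑ℱ ⊆ 𝒜} := by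
    refine ⟨⟨{C hI.some}, Finset.singleton_nonempty _, ?_⟩⟩
    intro B hB
    rw [Finset.coe_singleton, Set.mem_singleton_iff] at hB
    exact ⟨hI.some, hB⟩
  obtain ⟨v, hv⟩ :
      ∃ v : Ultrafilter ℕ,
        ∀ ℱ : {ℱ : Finset (Set ℕ) // ℱ.Nonempty ∧ ↑ℱ ⊆ 𝒜},
          {t : ℕ | {z : ℕ | t + z ∈ ⋂₀ (ℱ.1 : Set (Set ℕ))} ∈ r} ∈ v := by
    apply exists_ultrafilter_of_directed
    · rintro ⟨ℱ, hne, hsub⟩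
      obtain ⟨t, _, ht⟩ := hD r hrL ℱ hne hsub
      exact ⟨t, ht⟩
    · rintro ⟨ℱ₁, hne₁, hsub₁⟩ ⟨ℱ₂, hne₂, hsub₂⟩
      refine ⟨⟨ℱ₁ ∪ ℱ₂, hne₁.mono Finset.subset_union_left, by
        rw [Finset.coe_union]; exact Set.union_subset hsub₁ hsub₂⟩, ?_, ?_⟩
      · intro t ht
        refine mem_of_superset ht ?_
        intro z hz
        exact fun B hB => hz B (by
          rw [Finset.coe_union]; exact Set.mem_union_left _ hB)
      · intro t ht
        refine mem_of_superset ht ?_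
        intro z hz
        exact fun B hB => hz B (by
          rw [Finset.coe_union]; exact Set.mem_union_right _ hB)
  have hpL : v + r ∈ L := hL.2.2 r hrL v
  have hpC : ∀ N : I, C N ∈ v + r := by
    intro N
    rw [mem_addU]
    refine mem_of_superset (hv ⟨{C N}, Finset.singleton_nonempty _, by
      intro B hB
      rw [Finset.coe_singleton, Set.mem_singleton_iff] at hB
      exact ⟨N, hB⟩⟩) ?_
    intro t ht
    simp only [Finset.coe_singleton, Set.sInter_singleton] at ht
    exact ht
  -- Step E : idempotent in T = {s ∈ L | ∀ N, C N ∈ s}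
  obtain ⟨q, hqT, hqq⟩ :
      ∃ q ∈ {s : Ultrafilter ℕ | s ∈ L ∧ ∀ N : I, C N ∈ s}, q + q = q := by
    apply exists_idempotent_in_compact_add_subsemigroup Ultrafilter.continuous_add_left
    · exact ⟨v + r, hpL, hpC⟩
    · refine IsClosed.isCompact (IsClosed.inter hL.2.1 ?_)
      show IsClosed {s : Ultrafilter ℕ | ∀ N : I, C N ∈ s}
      have : {s : Ultrafilter ℕ | ∀ N : I, C N ∈ s} = ⋂ N : I, {s | C N ∈ s} := by
        ext s; simp
      rw [this]
      exact isClosed_iInter fun N => ultrafilter_isClosed_basic _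
    · rintro s ⟨hsL, hsC⟩ s' ⟨hs'L, hs'C⟩
      refine ⟨hL.2.2 s' hs'L s, fun N => ?_⟩
      rw [mem_addU]
      refine mem_of_superset (hsC N) ?_
      intro m hm
      obtain ⟨M, hM⟩ := hshift N m hm
      exact mem_of_superset (hs'C M) hM
  -- Step F : every member of q is PWS
  refine ⟨q, hqq, mem_of_superset (hqT.2 hI.some) (hCA hI.some), ?_⟩
  intro B hB
  have hcover : L ⊆ ⋃ a : ℕ, {w : Ultrafilter ℕ | {b | a + b ∈ B} ∈ w} := by
    intro w hw
    have : q ∈ Set.range (· + w) := by rw [hLmin w hw]; exact hqT.1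
    obtain ⟨z, hz⟩ := this
    have : {a : ℕ | {b | a + b ∈ B} ∈ w} ∈ z := by
      rw [← mem_addU (U := z) (V := w), show z + w = q from hz]
      exact hB
    obtain ⟨a, ha⟩ := Ultrafilter.nonempty_of_mem this
    exact Set.mem_iUnion.2 ⟨a, ha⟩
  obtain ⟨T, hT⟩ := (hL.2.1.isCompact).elim_finite_subcover
    (fun a : ℕ => {w : Ultrafilter ℕ | {b | a + b ∈ B} ∈ w})
    (fun a => ultrafilter_isOpen_basic _) hcover
  refine ⟨T, fun F => ?_⟩
  have hEq : ∀ y ∈ F, {b : ℕ | ∃ a ∈ T, a + (y + b) ∈ B} ∈ q := by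
    intro y _
    have hyL : (pure y : Ultrafilter ℕ) + q ∈ L := hL.2.2 q hqT.1 (pure y)
    obtain ⟨a, haT, ha⟩ := Set.mem_iUnion₂.1 (hT hyL)
    have : {b : ℕ | a + (y + b) ∈ B} ∈ q := by
      have := (mem_addU (U := (pure y : Ultrafilter ℕ)) (V := q)
        (A := {b | a + b ∈ B})).1 ha
      rwa [Ultrafilter.mem_pure] at this
    exact mem_of_superset this fun b hb => ⟨a, haT, hb⟩
  have : (⋂ y ∈ F, {b : ℕ | ∃ a ∈ T, a + (y + b) ∈ B}) ∈ q :=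
    (Filter.biInter_finset_mem F).2 hEq
  obtain ⟨x₀, hx₀⟩ := Ultrafilter.nonempty_of_mem this
  exact ⟨x₀, fun y hy => Set.mem_iInter₂.1 hx₀ y hy⟩

lemma CST_core (q : Ultrafilter ℕ) (hq : q + q = q) (A : Set ℕ) (hAq : A ∈ q)
    (hpws : ∀ B ∈ q, PWS B) (k : ℕ) (f : Fin k → ℕ → ℕ) :
    ∃ (a : ℕ → ℕ) (H : ℕ → Finset ℕ),
      (∀ n, (H n).Nonempty) ∧
      (∀ m₁ m₂, m₁ < m₂ → ∀ s ∈ H m₁, ∀ u ∈ H m₂, s < u) ∧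
      (∀ (i : Fin k) (F : Finset ℕ), F.Nonempty →
        (∑ n ∈ F, (a n + ∑ t ∈ H n, f i t)) ∈ A) := by
  classical
  -- the star set
  set As : Set ℕ := A ∩ {z | {b | z + b ∈ A} ∈ q} with hAsdef
  have hAsq : As ∈ q := by
    refine inter_mem hAq ?_
    exact (mem_addU (U := q) (V := q) (A := A)).1 (by rw [hq]; exact hAq)
  have hAsA : As ⊆ A := Set.inter_subset_left
  have hstar : ∀ z ∈ As, {b | z + b ∈ As} ∈ q := by
    rintro z ⟨_, hz2⟩
    have h2 : {b : ℕ | {b' : ℕ | (z + b) + b' ∈ A} ∈ q} ∈ q := by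
      have h3 := (mem_addU (U := q) (V := q) (A := {b' | z + b' ∈ A})).1
        (by rw [hq]; exact hz2)
      refine mem_of_superset h3 ?_
      intro b hb
      simp only [Set.mem_setOf_eq] at hb ⊢
      convert hb using 2
      ext b'
      simp [add_assoc]
    refine mem_of_superset (inter_mem hz2 h2) ?_
    rintro b ⟨hb1, hb2⟩
    exact ⟨hb1, hb2⟩
  -- notation for partial sums
  set SS : (ℕ → ℕ) → (ℕ → Finset ℕ) → Fin k → Finset ℕ → ℕ :=
    fun a H i F => ∑ n ∈ F, (a n + ∑ t ∈ H n, f i t) with hSS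
  set Inv : ℕ → (ℕ → ℕ) → (ℕ → Finset ℕ) → Prop := fun n a H =>
    (∀ m < n, (H m).Nonempty) ∧
    (∀ m₁ m₂, m₁ < m₂ → m₂ < n → ∀ s ∈ H m₁, ∀ u ∈ H m₂, s < u) ∧
    (∀ i : Fin k, ∀ F : Finset ℕ, F.Nonempty → ↑F ⊆ Set.Iio n → SS a H i F ∈ As)
    with hInv
  have base : Inv 0 (fun _ => 0) (fun _ => ∅) := by
    refine ⟨by omega, by omega, ?_⟩
    intro i F hF hsub
    obtain ⟨m, hm⟩ := hF
    exact absurd (hsub hm) (by simp)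
  have step : ∀ n a H, Inv n a H →
      ∃ a' H', (∀ m < n, a' m = a m) ∧ (∀ m < n, H' m = H m) ∧ Inv (n + 1) a' H' := by
    rintro n a H ⟨inv1, inv2, inv3⟩
    set Pn : Finset (Finset ℕ) := (Finset.range n).powerset.erase ∅ with hPndef
    have hPn : ∀ F ∈ Pn, F.Nonempty ∧ ↑F ⊆ Set.Iio n := by
      intro F hF
      obtain ⟨hne, hsub⟩ := Finset.mem_erase.1 hF
      refine ⟨Finset.nonempty_iff_ne_empty.2 hne, ?_⟩
      intro m hm
      exact Finset.mem_range.1 (Finset.mem_powerset.1 hsub hm)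
    set B : Set ℕ := As ∩ ⋂ i : Fin k, ⋂ F ∈ Pn, {b | SS a H i F + b ∈ As} with hBdef
    have hBq : B ∈ q := by
      refine inter_mem hAsq ?_
      rw [Filter.iInter_mem]
      intro i
      refine (Filter.biInter_finset_mem Pn).2 fun F hF => ?_
      exact hstar _ (inv3 i F (hPn F hF).1 (hPn F hF).2)
    set c : ℕ := (Finset.range n).sup (fun m => (H m).sup id) with hcdef
    have hc : ∀ m, m < n → ∀ t ∈ H m, t ≤ c := by
      intro m hm t ht
      calc t = id t := rfl
        _ ≤ (H m).sup id := Finset.le_sup ht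
        _ ≤ c := Finset.le_sup (f := fun m => (H m).sup id) (Finset.mem_range.2 hm)
    obtain ⟨an, Hn, hHne, hHgt, hmem⟩ := pws_jset (hpws B hBq) f c
    refine ⟨Function.update a n an, Function.update H n Hn,
      fun m hm => Function.update_of_ne (Nat.ne_of_lt hm) _ _,
      fun m hm => Function.update_of_ne (Nat.ne_of_lt hm) _ _, ?_, ?_, ?_⟩
    · intro m hm
      rcases Nat.lt_succ_iff_lt_or_eq.1 hm with h | rfl
      · rw [Function.update_of_ne (Nat.ne_of_lt h)]; exact inv1 m h
      · rw [Function.update_self]; exact hHne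
    · intro m₁ m₂ h12 h2 s hs u hu
      rcases Nat.lt_succ_iff_lt_or_eq.1 h2 with h | rfl
      · rw [Function.update_of_ne (Nat.ne_of_lt (h12.trans h))] at hs
        rw [Function.update_of_ne (Nat.ne_of_lt h)] at hu
        exact inv2 m₁ m₂ h12 h s hs u hu
      · rw [Function.update_of_ne (Nat.ne_of_lt h12)] at hs
        rw [Function.update_self] at hu
        exact lt_of_le_of_lt (hc m₁ h12 s hs) (hHgt u hu)
    · intro i F hFne hFsub
      have hterm : an + ∑ t ∈ Hn, f i t ∈ B := hmem i
      by_cases hn : n ∈ F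
      · have heq : ∀ m ∈ F.erase n, (Function.update a n an) m + ∑ t ∈ (Function.update H n Hn) m, f i t
            = a m + ∑ t ∈ H m, f i t := by
          intro m hm
          have hmn : m ≠ n := (Finset.mem_erase.1 hm).1
          rw [Function.update_of_ne hmn, Function.update_of_ne hmn]
        have hsplit : SS (Function.update a n an) (Function.update H n Hn) i F
            = SS (Function.update a n an) (Function.update H n Hn) i (F.erase n)
              + (an + ∑ t ∈ Hn, f i t) := by
          show (∑ m ∈ F, (Function.update a n an m + ∑ t ∈ Function.update H n Hn m, f i t))
              = (∑ m ∈ F.erase n, (Function.update a n an m + ∑ t ∈ Function.update H n Hn m, f i t))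
              + (an + ∑ t ∈ Hn, f i t)
          rw [← Finset.sum_erase_add F _ hn, Function.update_self, Function.update_self]
        rw [hsplit]
        rcases Finset.eq_empty_or_nonempty (F.erase n) with he | hne
        · rw [he]
          have h0 : SS (Function.update a n an) (Function.update H n Hn) i ∅ = 0 :=
            Finset.sum_empty
          rw [h0, zero_add]
          exact hterm.1
        · have hsubn : ↑(F.erase n) ⊆ Set.Iio n := by
            intro m hm
            obtain ⟨hmn, hmF⟩ := Finset.mem_erase.1 hm
            have := hFsub hmF
            simp only [Set.mem_Iio] at this ⊢
            omega
          have hEe : SS (Function.update a n an) (Function.update H n Hn) i (F.erase n)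
              = SS a H i (F.erase n) := by
            rw [hSS]; exact Finset.sum_congr rfl heq
          rw [hEe]
          have hPmem : F.erase n ∈ Pn := by
            refine Finset.mem_erase.2 ⟨Finset.nonempty_iff_ne_empty.1 hne, ?_⟩
            refine Finset.mem_powerset.2 fun m hm => Finset.mem_range.2 (hsubn hm)
          have := hterm.2
          rw [Set.mem_iInter] at this
          have := this i
          rw [Set.mem_iInter₂] at this
          exact this (F.erase n) hPmem
      · have hsubn : ↑F ⊆ Set.Iio n := by
          intro m hm
          have h1 := hFsub hm
          simp only [Set.mem_Iio] at h1 ⊢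
          rcases Nat.lt_succ_iff_lt_or_eq.1 h1 with h | rfl
          · exact h
          · exact absurd hm hn
        have hEe : SS (Function.update a n an) (Function.update H n Hn) i F = SS a H i F := by
          rw [hSS]
          refine Finset.sum_congr rfl fun m hm => ?_
          have hmn : m ≠ n := fun h => hn (h ▸ hm)
          rw [Function.update_of_ne hmn, Function.update_of_ne hmn]
        rw [hEe]
        exact inv3 i F hFne hsubn
  choose ea eH hea heH hinv using step
  let seq : (n : ℕ) → {p : (ℕ → ℕ) × (ℕ → Finset ℕ) // Inv n p.1 p.2} := fun n =>
    Nat.rec (motive := fun n => {p : (ℕ → ℕ) × (ℕ → Finset ℕ) // Inv n p.1 p.2})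
      ⟨((fun _ => 0), (fun _ => ∅)), base⟩
      (fun m ih => ⟨(ea m ih.1.1 ih.1.2 ih.2, eH m ih.1.1 ih.1.2 ih.2),
        hinv m ih.1.1 ih.1.2 ih.2⟩) n
  set aa : ℕ → ℕ := fun n => (seq (n + 1)).1.1 n with haa
  set HH : ℕ → Finset ℕ := fun n => (seq (n + 1)).1.2 n with hHH
  have hsucc : ∀ n : ℕ, (seq (n + 1)).1.1 = ea n (seq n).1.1 (seq n).1.2 (seq n).2
      ∧ (seq (n + 1)).1.2 = eH n (seq n).1.1 (seq n).1.2 (seq n).2 := fun n => ⟨rfl, rfl⟩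
  have agree : ∀ n m, m < n → (seq n).1.1 m = aa m ∧ (seq n).1.2 m = HH m := by
    intro n
    induction n with
    | zero => omega
    | succ n ih =>
      intro m hm
      rcases Nat.lt_succ_iff_lt_or_eq.1 hm with h | rfl
      · constructor
        · have e1 : (seq (n + 1)).1.1 m = (seq n).1.1 m := by
            rw [(hsucc n).1]; exact hea n _ _ _ m h
          exact e1.trans (ih m h).1
        · have e1 : (seq (n + 1)).1.2 m = (seq n).1.2 m := by
            rw [(hsucc n).2]; exact heH n _ _ _ m h
          exact e1.trans (ih m h).2
      · exact ⟨rfl, rfl⟩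
  refine ⟨aa, HH, ?_, ?_, ?_⟩
  · intro n
    exact (seq (n + 1)).2.1 n (Nat.lt_succ_self n)
  · intro m₁ m₂ h12 s hs u hu
    refine (seq (m₂ + 1)).2.2.1 m₁ m₂ h12 (Nat.lt_succ_self m₂) s ?_ u ?_
    · rw [(agree (m₂ + 1) m₁ (by omega)).2]; exact hs
    · rw [(agree (m₂ + 1) m₂ (by omega)).2]; exact hu
  · intro i F hFne
    set n : ℕ := F.sup id + 1 with hn
    have hsub : ↑F ⊆ Set.Iio n := by
      intro m hm
      have := Finset.le_sup (f := id) (Finset.mem_coe.1 hm)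
      simp only [Set.mem_Iio, hn, id] at this ⊢
      omega
    have h := (seq n).2.2.2 i F hFne hsub
    have hEq : SS ((seq n).1.1) ((seq n).1.2) i F
        = ∑ m ∈ F, (aa m + ∑ t ∈ HH m, f i t) := by
      show (∑ m ∈ F, ((seq n).1.1 m + ∑ t ∈ (seq n).1.2 m, f i t)) = _
      refine Finset.sum_congr rfl fun m hm => ?_
      have hmn : m < n := Set.mem_Iio.1 (hsub (Finset.mem_coe.2 hm))
      rw [(agree n m hmn).1, (agree n m hmn).2]
    exact hAsA (hEq ▸ h)

end CSTProof

/-- Furstenberg's Central Sets Theorem in `(ℕ,+)` with finitely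
many integer sequences; the relevant sums lie in (the image in `ℤ` of) `A`. -/
theorem furstenbergCentralSetsTheorem (A : Set ℕ) (hA : CentralAdd A)
    (k : ℕ) (y : Fin k → ℕ → ℤ) :
    ∃ (a : ℕ → ℕ) (H : ℕ → Finset ℕ),
      (∀ n : ℕ, (H n).Nonempty) ∧
      (∀ n : ℕ, ∀ s ∈ H n, ∀ u ∈ H (n + 1), s < u) ∧
      ∀ (i : Fin k) (F : Finset ℕ), F.Nonempty →
        (∑ n ∈ F, ((a n : ℤ) + ∑ t ∈ H n, y i t)) ∈
          ((fun q : ℕ => (q : ℤ)) '' A) := by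
  classical
  obtain ⟨q, hq, hAq, hpws⟩ := CSTProof.central_exists A hA
  set w : ℕ → ℕ := fun t => ∑ i : Fin k, (y i t).natAbs with hw
  set f : Fin k → ℕ → ℕ := fun i t => (y i t + w t).toNat with hf
  have hfz : ∀ (i : Fin k) (t : ℕ), (f i t : ℤ) = y i t + w t := by
    intro i t
    have h2 : ((y i t).natAbs : ℤ) ≤ (w t : ℤ) := by
      have : (y i t).natAbs ≤ w t :=
        Finset.single_le_sum (f := fun j => (y j t).natAbs)
          (fun _ _ => Nat.zero_le _) (Finset.mem_univ i)
      exact_mod_cast this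
    have h1 : (0 : ℤ) ≤ y i t + w t := by omega
    show ((y i t + w t).toNat : ℤ) = y i t + w t
    exact Int.toNat_of_nonneg h1
  obtain ⟨a, H, hHne, hord, hsum⟩ := CSTProof.CST_core q hq A hAq hpws k f
  refine ⟨fun n => a n + ∑ t ∈ H n, w t, H, hHne, ?_, ?_⟩
  · intro n s hs u hu
    exact hord n (n + 1) (Nat.lt_succ_self n) s hs u hu
  · intro i F hF
    refine ⟨∑ n ∈ F, (a n + ∑ t ∈ H n, f i t), hsum i F hF, ?_⟩
    push_cast
    refine Finset.sum_congr rfl fun n _ => ?_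
    have : ∑ t ∈ H n, (f i t : ℤ) = (∑ t ∈ H n, (w t : ℤ)) + ∑ t ∈ H n, y i t := by
      rw [← Finset.sum_add_distrib]
      refine Finset.sum_congr rfl fun t _ => ?_
      rw [hfz i t]; ring
    rw [this]; ring
end

section
/- Let (S,·) be a semigroup, A ⊆ S a J-set (noncommutative sense), and b ∈ S such that b⁻¹A ∩ A is a J-set. Then for every finite nonempty set F of sequences in S and n ∈ ℕ, there exist m ∈ ℕ, a ∈ S^{m+1}, t ∈ 𝒥_m with t(1) > n such that both x(m,a,t,f) ∈ A and b·x(m,a,t,f) ∈ A for all f ∈ F. -/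
/-- if `A` and `b⁻¹A ∩ A` are noncommutative `J`-sets, then
witnesses can be found with `t 0 > n` landing in `A` both directly and after
left multiplication by `b`. -/
theorem jSetNC_translate {S : Type*} [Semigroup S] (A : Set S) (hA : JSetNC A)
    (b : S) (hb : JSetNC ({s : S | b * s ∈ A} ∩ A))
    (F : Finset (ℕ → S)) (hF : F.Nonempty) (n : ℕ) :
    ∃ (m : ℕ) (a : ℕ → S) (t : ℕ → ℕ), 1 ≤ m ∧
      (∀ i j : ℕ, i < j → j < m → t i < t j) ∧ n < t 0 ∧
      ∀ f ∈ F, xNC m a t f ∈ A ∧ b * xNC m a t f ∈ A := by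
  classical
  obtain ⟨m, a, t, hm, ht, hmem⟩ := hb (F.image (fun f k => f (k + n + 1))) (hF.image _)
  refine ⟨m, a, fun j => t j + n + 1, hm, ?_, by show n < t 0 + n + 1; omega, ?_⟩
  · intro i j hij hjm; have := ht i j hij hjm; show t i + n + 1 < t j + n + 1; omega
  · intro f hf
    have h := hmem (fun k => f (k + n + 1)) (Finset.mem_image_of_mem _ hf)
    have hx : xNC m a (fun j => t j + n + 1) f = xNC m a t (fun k => f (k + n + 1)) := rfl
    rw [hx]
    exact ⟨h.2, h.1⟩
end
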